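/- arXiv:2311.17030 — 3 statements merged into one kernel-verified Lean document; each statement's English description precedes it below -/
import Mathlib

section
/- Let v_disc, v_dorm ∈ ℝ^n be orthogonal unit vectors, W : ℝ^n → ℝ^m linear with W v_disc = 0, and act_A, act_B ∈ ℝ^n with v_dormᵀ act_A = v_dormᵀ act_B. Set v = (v_disc + v_dorm)/√2 and act_B' = act_B + ((vᵀ act_A) - (vᵀ act_B)) • v. Then W act_B' = W act_B + (1/2) • (v_discᵀ act_A - v_discᵀ act_B) • (W v_dorm). -/
open Matrix

theorem stmt_2 {n m : ℕ} (W : Matrix (Fin m) (Fin n) ℝ)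
    (v_disc v_dorm act_A act_B : Fin n → ℝ)
    (hdisc : v_disc ⬝ᵥ v_disc = 1) (hdorm : v_dorm ⬝ᵥ v_dorm = 1)
    (horth : v_disc ⬝ᵥ v_dorm = 0)
    (hker : W.mulVec v_disc = 0)
    (heq : v_dorm ⬝ᵥ act_A = v_dorm ⬝ᵥ act_B) :
    let v := (Real.sqrt 2)⁻¹ • (v_disc + v_dorm)
    let act_B' := act_B + ((v ⬝ᵥ act_A) - (v ⬝ᵥ act_B)) • v
    W.mulVec act_B' =
      W.mulVec act_B + ((1 / 2) * (v_disc ⬝ᵥ act_A - v_disc ⬝ᵥ act_B)) • W.mulVec v_dorm := by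
  intro v act_B'
  have hs : (Real.sqrt 2)⁻¹ * (Real.sqrt 2)⁻¹ = 1 / 2 := by
    rw [← mul_inv]
    rw [← Real.sqrt_mul_self (by norm_num : (0:ℝ) ≤ 2)]
    norm_num
  have hv : v ⬝ᵥ act_A - v ⬝ᵥ act_B
      = (Real.sqrt 2)⁻¹ * (v_disc ⬝ᵥ act_A - v_disc ⬝ᵥ act_B) := by
    simp only [v, smul_dotProduct, add_dotProduct, smul_eq_mul]
    rw [heq]; ring
  have hWv : W.mulVec v = (Real.sqrt 2)⁻¹ • W.mulVec v_dorm := by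
    simp [v, mulVec_smul, mulVec_add, hker]
  show W.mulVec (act_B + (v ⬝ᵥ act_A - v ⬝ᵥ act_B) • v) = _
  rw [mulVec_add, mulVec_smul, hWv, hv, smul_smul]
  congr 1
  rw [mul_comm ((Real.sqrt 2)⁻¹ * _), ← mul_assoc, hs]
end

section
/- Let Σ ∈ ℝ^{n×n} be positive definite, k ∈ ℝ^n nonzero, W ∈ ℝ^{m×n}, and v ∈ ℝ^m. Among all rank-1 updates W' = W + a bᵀ with a ∈ ℝ^m, b ∈ ℝ^n satisfying W' k = v, the choice a = v - W k and b = (Σ⁻¹ k)/(kᵀ Σ⁻¹ k) minimizes trace(Cov_{x ~ N(0,Σ)}[a bᵀ x]) = ‖a‖₂² · (bᵀ Σ b). -/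
open Matrix

lemma vmv_mulVec {m n : ℕ} (a : Fin m → ℝ) (b k : Fin n → ℝ) :
    (vecMulVec a b).mulVec k = (b ⬝ᵥ k) • a := by
  ext i
  simp only [vecMulVec_apply, mulVec, dotProduct, Pi.smul_apply, smul_eq_mul, Finset.sum_mul]
  exact Finset.sum_congr rfl fun j _ => by ring

theorem stmt_6 {n m : ℕ} (Sg : Matrix (Fin n) (Fin n) ℝ) (hS : Sg.PosDef)
    (k : Fin n → ℝ) (hk : k ≠ 0)
    (W : Matrix (Fin m) (Fin n) ℝ) (v : Fin m → ℝ) :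
    let a₀ : Fin m → ℝ := v - W.mulVec k
    let b₀ : Fin n → ℝ := (k ⬝ᵥ Sg⁻¹.mulVec k)⁻¹ • Sg⁻¹.mulVec k
    ((W + vecMulVec a₀ b₀).mulVec k = v) ∧
    (∀ (a : Fin m → ℝ) (b : Fin n → ℝ), (W + vecMulVec a b).mulVec k = v →
      (a₀ ⬝ᵥ a₀) * (b₀ ⬝ᵥ Sg.mulVec b₀) ≤ (a ⬝ᵥ a) * (b ⬝ᵥ Sg.mulVec b)) := by
  intro a₀ b₀
  have hSinv : Sg⁻¹.PosDef := hS.inv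
  set u : Fin n → ℝ := Sg⁻¹.mulVec k with hu
  have hc : 0 < k ⬝ᵥ u := by
    have := hSinv.dotProduct_mulVec_pos hk
    simpa using this
  set c : ℝ := k ⬝ᵥ u with hcdef
  have hSu : Sg.mulVec u = k := by
    rw [hu, mulVec_mulVec, Matrix.mul_nonsing_inv _ hS.det_pos.ne'.isUnit, one_mulVec]
  have hb0 : b₀ = c⁻¹ • u := rfl
  have huk : u ⬝ᵥ k = c := by rw [dotProduct_comm]
  have hb0k : b₀ ⬝ᵥ k = 1 := by
    rw [hb0, smul_dotProduct, huk, smul_eq_mul, inv_mul_cancel₀ hc.ne']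
  have hb0Sb0 : b₀ ⬝ᵥ Sg.mulVec b₀ = c⁻¹ := by
    rw [hb0, mulVec_smul, hSu, smul_dotProduct, dotProduct_smul, huk, smul_eq_mul,
      smul_eq_mul, inv_mul_cancel₀ hc.ne', mul_one]
  have hsym : ∀ b : Fin n → ℝ, u ⬝ᵥ Sg.mulVec b = k ⬝ᵥ b := by
    intro b
    rw [dotProduct_mulVec, ← mulVec_transpose, show Sgᵀ = Sg from hS.1, hSu]
  constructor
  · rw [add_mulVec, vmv_mulVec, hb0k, one_smul]
    show W.mulVec k + (v - W.mulVec k) = v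
    abel
  · intro a b hab
    rw [add_mulVec, vmv_mulVec] at hab
    have ha0 : (b ⬝ᵥ k) • a = a₀ := by
      have : a₀ = v - W.mulVec k := rfl
      rw [this, ← hab]; abel
    set t : ℝ := b ⬝ᵥ k with ht
    have haa : a₀ ⬝ᵥ a₀ = t ^ 2 * (a ⬝ᵥ a) := by
      rw [← ha0, smul_dotProduct, dotProduct_smul, smul_eq_mul, smul_eq_mul]; ring
    have hB := hS.posSemidef.dotProduct_mulVec_nonneg (b - (t / c) • u)
    simp only [star_trivial] at hB
    simp only [mulVec_sub, mulVec_smul, hSu, sub_dotProduct, dotProduct_sub,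
      smul_dotProduct, dotProduct_smul, smul_eq_mul, hsym, huk] at hB
    rw [dotProduct_comm k b, ← ht] at hB
    have hCS : t ^ 2 ≤ (b ⬝ᵥ Sg.mulVec b) * c := by
      have h2 : t - t / c * c = 0 := by field_simp; ring
      rw [h2, mul_zero, sub_zero] at hB
      have h3 : c * (t / c * t) = t ^ 2 := by field_simp
      nlinarith [mul_le_mul_of_nonneg_left hB hc.le, h3]
    have hanneg : 0 ≤ a ⬝ᵥ a := by
      simp only [dotProduct]
      exact Finset.sum_nonneg fun i _ => mul_self_nonneg _
    rw [haa, hb0Sb0]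
    have h5 := mul_le_mul_of_nonneg_left hCS (mul_nonneg hanneg (inv_nonneg.mpr hc.le))
    have h6 : a ⬝ᵥ a * c⁻¹ * (b ⬝ᵥ Sg.mulVec b * c) = a ⬝ᵥ a * (b ⬝ᵥ Sg.mulVec b) := by
      field_simp
    nlinarith [h5, h6]
end

section
/- Let v ∈ ℝ^n be a unit vector, W ∈ ℝ^{m×n}, and suppose the row-space component v_row of v (orthogonal projection onto (ker W)⊥) satisfies v_rowᵀ act_A = v_rowᵀ act_B for given act_A, act_B ∈ ℝ^n. Then patching along the normalized direction v_row/‖v_row‖ (assuming v_row ≠ 0) from act_A into act_B leaves the MLP output W act_B unchanged, while patching along v changes the output by (v_nullᵀ(act_A - act_B)) • (W v_row), where v_null = v - v_row. -/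
open Matrix

theorem stmt_19 {n m : ℕ} (W : Matrix (Fin m) (Fin n) ℝ)
    (v v_null v_row act_A act_B : Fin n → ℝ) (hv : v ⬝ᵥ v = 1)
    (hdecomp : v = v_null + v_row)
    (hnull : W.mulVec v_null = 0)
    (hrowperp : ∀ u : Fin n → ℝ, W.mulVec u = 0 → v_row ⬝ᵥ u = 0)
    (hrowne : v_row ≠ 0)
    (hdormant : v_row ⬝ᵥ act_A = v_row ⬝ᵥ act_B) :
    let vr := (Real.sqrt (v_row ⬝ᵥ v_row))⁻¹ • v_row
    (W.mulVec (act_B + (vr ⬝ᵥ (act_A - act_B)) • vr) = W.mulVec act_B) ∧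
    (W.mulVec (act_B + (v ⬝ᵥ (act_A - act_B)) • v) - W.mulVec act_B
      = (v_null ⬝ᵥ (act_A - act_B)) • W.mulVec v_row) := by
  intro vr
  have hrd : v_row ⬝ᵥ (act_A - act_B) = 0 := by
    rw [dotProduct_sub, hdormant, sub_self]
  constructor
  · have : vr ⬝ᵥ (act_A - act_B) = 0 := by
      simp only [vr, smul_dotProduct, smul_eq_mul, hrd, mul_zero]
    rw [this]
    simp
  · have hWv : W.mulVec v = W.mulVec v_row := by
      rw [hdecomp, Matrix.mulVec_add, hnull, zero_add]
    have hvd : v ⬝ᵥ (act_A - act_B) = v_null ⬝ᵥ (act_A - act_B) := by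
      rw [hdecomp, add_dotProduct, hrd, add_zero]
    rw [Matrix.mulVec_add, Matrix.mulVec_smul, hWv, hvd]
    abel
end
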